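/- Fix θ ∈ (0, π) and φ ∈ ℝ, and for (θ', φ') ≠ (θ, φ) define D(θ',φ') = −(1/4π)·ln(1 − cos θ·cos θ' − sin θ·sin θ'·cos(φ − φ')) + (1/4π)·ln((θ − θ')² + sin²θ·(φ − φ')²). Then D extends continuously to the point (θ, φ), with limit value −(1/4π)·ln(1/2) as (θ', φ') → (θ, φ). -/

import Mathlib

open Filter Topology

private lemma sin_div_self_tendsto :
    Filter.Tendsto (fun x : ℝ => Real.sin x / x) (𝓝[≠] 0) (𝓝 1) := by
  have h := hasDerivAt_iff_tendsto_slope.mp (Real.hasDerivAt_sin 0)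
  simp only [Real.cos_zero] at h
  refine h.congr' ?_
  filter_upwards [self_mem_nhdsWithin] with x hx
  simp [slope_def_field, Real.sin_zero]

private lemma one_sub_cos_div_sq_tendsto :
    Filter.Tendsto (fun x : ℝ => (1 - Real.cos x) / x ^ 2) (𝓝[≠] 0) (𝓝 (1 / 2)) := by
  have hmap : Filter.Tendsto (fun x : ℝ => x / 2) (𝓝[≠] 0) (𝓝[≠] 0) := by
    apply Filter.Tendsto.inf
    · have := (tendsto_id : Filter.Tendsto id (𝓝 (0:ℝ)) (𝓝 0)).div_const 2
      simpa using this
    · refine tendsto_principal_principal.2 fun x hx => ?_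
      simp only [Set.mem_compl_iff, Set.mem_singleton_iff] at *
      intro h; exact hx (by linarith)
  have h1 : Filter.Tendsto (fun x : ℝ => (Real.sin (x / 2) / (x / 2)) ^ 2 / 2)
      (𝓝[≠] 0) (𝓝 (1 / 2)) := by
    have := ((sin_div_self_tendsto.comp hmap).pow 2).div_const 2
    simpa using this
  refine h1.congr' ?_
  filter_upwards [self_mem_nhdsWithin] with x hx
  have hx0 : x ≠ 0 := hx
  have hcos : 1 - Real.cos x = 2 * Real.sin (x / 2) ^ 2 := by
    have := Real.sin_sq_eq_half_sub (x / 2)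
    rw [show 2 * (x / 2) = x by ring] at this
    linarith
  field_simp
  rw [hcos]

private noncomputable def hfun : ℝ → ℝ :=
  fun x => if x = 0 then 1 / 2 else (1 - Real.cos x) / x ^ 2

private lemma hfun_tendsto : Filter.Tendsto hfun (𝓝 0) (𝓝 (1 / 2)) := by
  rw [← nhdsNE_sup_pure (0 : ℝ)]
  refine Filter.Tendsto.sup ?_ ?_
  · refine one_sub_cos_div_sq_tendsto.congr' ?_
    filter_upwards [self_mem_nhdsWithin] with x hx
    have hx0 : x ≠ 0 := hx
    simp [hfun, hx0]
  · have : hfun 0 = 1 / 2 := by simp [hfun]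
    simpa [this] using tendsto_pure_nhds hfun 0

private lemma sq_mul_hfun (x : ℝ) : x ^ 2 * hfun x = 1 - Real.cos x := by
  by_cases hx : x = 0
  · simp [hfun, hx]
  · simp only [hfun, if_neg hx]
    field_simp

/-- Continuity of the regular part of the spherical Green function across the diagonal:
away from the poles, the difference `D = G - Γ - (ln 2)/(4π)` of the spherical Green kernel
and the planar comparison kernel tends to `-(1/4π) ln(1/2)` at the diagonal. -/
theorem green_regular_part_tendsto (θ φ : ℝ) (hθ : θ ∈ Set.Ioo 0 Real.pi) :
    Filter.Tendsto
      (fun p : ℝ × ℝ =>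
        -(1 / (4 * Real.pi)) *
            Real.log (1 - Real.cos θ * Real.cos p.1
              - Real.sin θ * Real.sin p.1 * Real.cos (φ - p.2))
          + (1 / (4 * Real.pi)) *
              Real.log ((θ - p.1) ^ 2 + Real.sin θ ^ 2 * (φ - p.2) ^ 2))
      (𝓝[≠] ((θ, φ) : ℝ × ℝ))
      (𝓝 (-(1 / (4 * Real.pi)) * Real.log (1 / 2))) := by
  have hs : 0 < Real.sin θ := Real.sin_pos_of_pos_of_lt_pi hθ.1 hθ.2
  set s := Real.sin θ with hs_def
  set num : ℝ × ℝ → ℝ := fun p =>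
    1 - Real.cos θ * Real.cos p.1 - s * Real.sin p.1 * Real.cos (φ - p.2) with hnum_def
  set den : ℝ × ℝ → ℝ := fun p => (θ - p.1) ^ 2 + s ^ 2 * (φ - p.2) ^ 2 with hden_def
  -- structural identity for the numerator
  have hnum_eq : ∀ p : ℝ × ℝ,
      num p = (1 - Real.cos (θ - p.1)) + s * Real.sin p.1 * (1 - Real.cos (φ - p.2)) := by
    intro p
    simp only [hnum_def, Real.cos_sub, hs_def]
    ring
  -- A and B coefficient functions
  set A : ℝ × ℝ → ℝ := fun p => hfun (θ - p.1) with hA_def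
  set B : ℝ × ℝ → ℝ := fun p => (Real.sin p.1 / s) * hfun (φ - p.2) with hB_def
  have hA : Filter.Tendsto A (𝓝 ((θ, φ) : ℝ × ℝ)) (𝓝 (1 / 2)) := by
    apply hfun_tendsto.comp
    have : Filter.Tendsto (fun p : ℝ × ℝ => θ - p.1) (𝓝 (θ, φ)) (𝓝 (θ - θ)) :=
      (continuous_const.sub continuous_fst).tendsto _
    simpa using this
  have hB : Filter.Tendsto B (𝓝 ((θ, φ) : ℝ × ℝ)) (𝓝 (1 / 2)) := by
    have h1 : Filter.Tendsto (fun p : ℝ × ℝ => Real.sin p.1 / s) (𝓝 (θ, φ)) (𝓝 1) := by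
      have : Filter.Tendsto (fun p : ℝ × ℝ => Real.sin p.1 / s) (𝓝 (θ, φ))
          (𝓝 (Real.sin θ / s)) :=
        ((Real.continuous_sin.comp continuous_fst).div_const s).tendsto _
      convert this using 2; exact (div_self hs.ne').symm
    have h2 : Filter.Tendsto (fun p : ℝ × ℝ => hfun (φ - p.2)) (𝓝 (θ, φ)) (𝓝 (1 / 2)) := by
      apply hfun_tendsto.comp
      have : Filter.Tendsto (fun p : ℝ × ℝ => φ - p.2) (𝓝 (θ, φ)) (𝓝 (φ - φ)) :=
        (continuous_const.sub continuous_snd).tendsto _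
      simpa using this
    simpa using h1.mul h2
  -- decomposition of the numerator
  have hnum_AB : ∀ p : ℝ × ℝ,
      num p = (θ - p.1) ^ 2 * A p + s ^ 2 * (φ - p.2) ^ 2 * B p := by
    intro p
    rw [hnum_eq p]
    have h1 : (θ - p.1) ^ 2 * A p = 1 - Real.cos (θ - p.1) := sq_mul_hfun _
    have h2 : s ^ 2 * (φ - p.2) ^ 2 * B p = s * Real.sin p.1 * (1 - Real.cos (φ - p.2)) := by
      simp only [hB_def]
      rw [← sq_mul_hfun (φ - p.2)]
      field_simp
    rw [h1, h2]
  -- den positive off the diagonal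
  have hden_pos : ∀ p : ℝ × ℝ, p ≠ (θ, φ) → 0 < den p := by
    intro p hp
    by_cases h1 : p.1 = θ
    · have h2 : p.2 ≠ φ := by
        intro h2; exact hp (Prod.ext h1 h2)
      have hb : 0 < s ^ 2 * (φ - p.2) ^ 2 := by
        apply mul_pos (by positivity)
        have : φ - p.2 ≠ 0 := sub_ne_zero.mpr (Ne.symm h2)
        positivity
      simp only [hden_def]
      nlinarith [sq_nonneg (θ - p.1)]
    · have ha : 0 < (θ - p.1) ^ 2 := by
        have : θ - p.1 ≠ 0 := sub_ne_zero.mpr (Ne.symm h1)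
        positivity
      simp only [hden_def]
      nlinarith [sq_nonneg (s * (φ - p.2))]
  -- ratio tends to 1/2
  have hR : Filter.Tendsto (fun p : ℝ × ℝ => num p / den p) (𝓝[≠] ((θ, φ) : ℝ × ℝ))
      (𝓝 (1 / 2)) := by
    rw [tendsto_iff_dist_tendsto_zero]
    have hM : Filter.Tendsto (fun p : ℝ × ℝ => max |A p - 1/2| |B p - 1/2|)
        (𝓝[≠] ((θ, φ) : ℝ × ℝ)) (𝓝 0) := by
      have : Filter.Tendsto (fun p : ℝ × ℝ => max |A p - 1/2| |B p - 1/2|)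
          (𝓝 ((θ, φ) : ℝ × ℝ)) (𝓝 (max |(1:ℝ)/2 - 1/2| |(1:ℝ)/2 - 1/2|)) :=
        ((hA.sub tendsto_const_nhds).abs).max ((hB.sub tendsto_const_nhds).abs)
      simpa using this.mono_left nhdsWithin_le_nhds
    refine squeeze_zero' ?_ ?_ hM
    · filter_upwards with p; exact dist_nonneg
    · filter_upwards [self_mem_nhdsWithin] with p hp
      have hp' : p ≠ (θ, φ) := hp
      have hd : 0 < den p := hden_pos p hp'
      set a := (θ - p.1) ^ 2 with ha_def
      set b := s ^ 2 * (φ - p.2) ^ 2 with hb_def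
      have ha0 : 0 ≤ a := sq_nonneg _
      have hb0 : 0 ≤ b := by positivity
      have hdab : den p = a + b := rfl
      have key : num p / den p - 1 / 2 = (a * (A p - 1/2) + b * (B p - 1/2)) / den p := by
        have hne : a + b ≠ 0 := by rw [← hdab]; exact hd.ne'
        rw [hnum_AB p, hdab, ← ha_def, ← hb_def, eq_div_iff hne, sub_mul, div_mul_cancel₀ _ hne]
        ring
      rw [Real.dist_eq, key, abs_div, abs_of_pos hd]
      rw [div_le_iff₀ hd]
      calc |a * (A p - 1/2) + b * (B p - 1/2)|
          ≤ a * |A p - 1/2| + b * |B p - 1/2| := by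
            refine (abs_add_le _ _).trans ?_
            rw [abs_mul, abs_mul, abs_of_nonneg ha0, abs_of_nonneg hb0]
        _ ≤ a * max |A p - 1/2| |B p - 1/2| + b * max |A p - 1/2| |B p - 1/2| := by
            gcongr
            · exact le_max_left _ _
            · exact le_max_right _ _
        _ = max |A p - 1/2| |B p - 1/2| * den p := by rw [hdab]; ring
  -- eventually num > 0
  have hnum_pos : ∀ᶠ p in 𝓝[≠] ((θ, φ) : ℝ × ℝ), 0 < num p := by
    have hRpos : ∀ᶠ p in 𝓝[≠] ((θ, φ) : ℝ × ℝ), 0 < num p / den p :=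
      hR.eventually (eventually_gt_nhds (by norm_num : (0:ℝ) < 1/2))
    filter_upwards [hRpos, self_mem_nhdsWithin] with p h1 h2
    have hd : 0 < den p := hden_pos p h2
    exact (div_pos_iff.mp h1).resolve_right (fun h => absurd hd (not_lt.mpr h.2.le)) |>.1
  -- final assembly
  have hlog : Filter.Tendsto (fun p : ℝ × ℝ => -(1 / (4 * Real.pi)) * Real.log (num p / den p))
      (𝓝[≠] ((θ, φ) : ℝ × ℝ)) (𝓝 (-(1 / (4 * Real.pi)) * Real.log (1 / 2))) := by
    have hcont : ContinuousAt Real.log (1 / 2) :=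
      Real.continuousAt_log (by norm_num)
    exact (hcont.tendsto.comp hR).const_mul _
  refine hlog.congr' ?_
  filter_upwards [hnum_pos, self_mem_nhdsWithin] with p h1 h2
  have hd : 0 < den p := hden_pos p h2
  rw [Real.log_div h1.ne' hd.ne']
  ring
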